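/- Let V = ℝ⁴ be symplectic, l ⊂ V a line, and T : V → V a unipotent symplectic map such that T fixes l^⊥ pointwise and (T − id)(V) = l (a rank-1 unipotent). Let L ⊂ V be a Lagrangian plane with l ⊄ L. Then l^⊥ ∩ L is a line m not contained in l, T^n L ∩ l^⊥ = m for all n, and T^n L converges in the Lagrangian Grassmannian, as n → +∞, to the Lagrangian c_l(L) := l + (l^⊥ ∩ L). -/

import Mathlib

/-- The standard symplectic form on ℝ⁴, as a bilinear map; coordinates 0,1,2,3
correspond to the symplectic basis e₁,e₂,f₁,f₂. -/
noncomputable def omB : (Fin 4 → ℝ) →ₗ[ℝ] (Fin 4 → ℝ) →ₗ[ℝ] ℝ :=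
  LinearMap.mk₂ ℝ (fun u v => u 0 * v 2 - u 2 * v 0 + u 1 * v 3 - u 3 * v 1)
    (fun m₁ m₂ n => by simp only [Pi.add_apply]; ring)
    (fun c m n => by simp only [Pi.smul_apply, smul_eq_mul]; ring)
    (fun m n₁ n₂ => by simp only [Pi.add_apply]; ring)
    (fun c m n => by simp only [Pi.smul_apply, smul_eq_mul]; ring)

/-- Symplectic orthogonal of a subspace. -/
noncomputable def symplPerp (l : Submodule ℝ (Fin 4 → ℝ)) : Submodule ℝ (Fin 4 → ℝ) :=
  ⨅ w ∈ l, LinearMap.ker (omB.flip w)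

lemma omB_apply (u v : Fin 4 → ℝ) :
    omB u v = u 0 * v 2 - u 2 * v 0 + u 1 * v 3 - u 3 * v 1 := rfl

lemma omB_isAlt : LinearMap.BilinForm.IsAlt omB := fun u => by
  simp [omB_apply]; ring

lemma omB_isRefl : LinearMap.BilinForm.IsRefl omB := omB_isAlt.isRefl

lemma omB_nondeg : LinearMap.BilinForm.Nondegenerate omB := by
  rw [LinearMap.BilinForm.Nondegenerate, omB_isRefl.nondegenerate_iff_separatingLeft]
  intro m h
  funext i
  fin_cases i
  · simpa [omB_apply, Pi.single_apply] using h (Pi.single 2 1)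
  · simpa [omB_apply, Pi.single_apply] using h (Pi.single 3 1)
  · have := h (Pi.single 0 1); simp [omB_apply, Pi.single_apply] at this; simpa using this
  · have := h (Pi.single 1 1); simp [omB_apply, Pi.single_apply] at this; simpa using this

lemma mem_symplPerp {l : Submodule ℝ (Fin 4 → ℝ)} {v : Fin 4 → ℝ} :
    v ∈ symplPerp l ↔ ∀ w ∈ l, omB v w = 0 := by
  simp [symplPerp, Submodule.mem_iInf, LinearMap.mem_ker]

lemma symplPerp_eq (l : Submodule ℝ (Fin 4 → ℝ)) :
    symplPerp l = LinearMap.BilinForm.orthogonal omB l := by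
  ext v
  rw [mem_symplPerp, LinearMap.BilinForm.mem_orthogonal_iff]
  exact ⟨fun h n hn => omB_isRefl _ _ (h n hn), fun h n hn => omB_isRefl _ _ (h n hn)⟩

lemma finrank_symplPerp (l : Submodule ℝ (Fin 4 → ℝ)) :
    Module.finrank ℝ (symplPerp l) = 4 - Module.finrank ℝ l := by
  rw [symplPerp_eq, LinearMap.BilinForm.finrank_orthogonal omB_nondeg]
  congr 1
  simp [Module.finrank_fintype_fun_eq_card]

/-- Let T be a rank-1 unipotent symplectic map of ℝ⁴ fixing l^⊥ pointwise with
(T − id)(V) = l, and let L be a Lagrangian with l ⊄ L.  Then l^⊥ ∩ L is a line m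
not contained in l, T^n L ∩ l^⊥ = m for all n, and T^n L converges to the
Lagrangian c_l(L) = l + m: the fixed part is m, and for any w ∈ L ∖ l^⊥ the
rescaled iterates n⁻¹·(Tⁿ w) converge to a nonzero vector of l. -/
theorem rank_one_unipotent_contracts_lagrangians
    (T : (Fin 4 → ℝ) →ₗ[ℝ] (Fin 4 → ℝ))
    (hsymp : ∀ u v : Fin 4 → ℝ, omB (T u) (T v) = omB u v)
    (l : Submodule ℝ (Fin 4 → ℝ)) (hl : Module.finrank ℝ l = 1)
    (hfix : ∀ v ∈ symplPerp l, T v = v)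
    (hrange : LinearMap.range (T - LinearMap.id) = l)
    (L : Submodule ℝ (Fin 4 → ℝ)) (hL2 : Module.finrank ℝ L = 2)
    (hLag : ∀ u ∈ L, ∀ v ∈ L, omB u v = 0) (hnot : ¬ l ≤ L) :
    (Module.finrank ℝ ↥(symplPerp l ⊓ L) = 1 ∧ ¬ (symplPerp l ⊓ L ≤ l)) ∧
    (∀ k : ℕ, symplPerp l ⊓ L.map (T ^ k) = symplPerp l ⊓ L) ∧
    (∀ w ∈ L, w ∉ symplPerp l →
      ∃ u ∈ l, u ≠ 0 ∧
        Filter.Tendsto (fun k : ℕ => (k : ℝ)⁻¹ • ((T ^ k) w))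
          Filter.atTop (nhds u)) := by
  set δ : (Fin 4 → ℝ) →ₗ[ℝ] (Fin 4 → ℝ) := T - LinearMap.id with hδdef
  have hδ : ∀ v, δ v = T v - v := fun v => rfl
  -- l is isotropic
  have hll : l ≤ symplPerp l := by
    obtain ⟨x, hx0, hxall⟩ := finrank_eq_one_iff'.mp hl
    intro u hu
    rw [mem_symplPerp]
    intro w hw
    obtain ⟨a, ha⟩ := hxall ⟨u, hu⟩
    obtain ⟨b, hb⟩ := hxall ⟨w, hw⟩
    have ha' : u = a • (x : Fin 4 → ℝ) := congrArg Subtype.val ha.symm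
    have hb' : w = b • (x : Fin 4 → ℝ) := congrArg Subtype.val hb.symm
    rw [ha', hb', map_smul, map_smul, smul_eq_mul, LinearMap.smul_apply, smul_eq_mul,
      omB_isAlt (x : Fin 4 → ℝ)]
    ring
  -- kernel of δ is symplPerp l
  have hker : ∀ v, δ v = 0 ↔ v ∈ symplPerp l := by
    intro v
    constructor
    · intro h0
      have hTv : T v = v := by
        have := hδ v; rw [h0] at this; exact (sub_eq_zero.mp this.symm)
      rw [mem_symplPerp]
      intro w hw
      rw [← hrange] at hw
      obtain ⟨u, hu⟩ := hw
      have hw' : w = T u - u := by rw [← hu]; rfl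
      have : omB (T v) (T u) = omB v u := hsymp v u
      rw [hTv] at this
      rw [hw', map_sub, this, sub_self]
    · intro hv
      rw [hδ, hfix v hv, sub_self]
  have hδl : ∀ v, δ v ∈ l := by
    intro v; rw [← hrange]; exact ⟨v, rfl⟩
  have hδδ : ∀ v, δ (δ v) = 0 := fun v => (hker (δ v)).mpr (hll (hδl v))
  -- power formula
  have hpow : ∀ (k : ℕ) (v : Fin 4 → ℝ), (T ^ k) v = v + (k : ℝ) • δ v := by
    intro k
    induction k with
    | zero => intro v; simp
    | succ k ih =>
      intro v
      rw [pow_succ', Module.End.mul_apply, ih v]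
      have hT : ∀ x, T x = x + δ x := fun x => by rw [hδ]; abel
      rw [hT (v + (k : ℝ) • δ v), map_add, map_smul, hδδ, smul_zero, add_zero]
      push_cast
      module
  -- L not inside symplPerp l
  have hVdim : Module.finrank ℝ (Fin 4 → ℝ) = 4 := by
    simp [Module.finrank_fintype_fun_eq_card]
  have hLnot : ¬ L ≤ symplPerp l := by
    intro hLe
    -- L ⊔ l is isotropic
    have hMiso : ∀ u ∈ L ⊔ l, ∀ v ∈ L ⊔ l, omB u v = 0 := by
      intro u hu v hv
      obtain ⟨a, ha, b, hb, rfl⟩ := Submodule.mem_sup.mp hu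
      obtain ⟨c, hc, d, hd, rfl⟩ := Submodule.mem_sup.mp hv
      have h1 : omB a c = 0 := hLag a ha c hc
      have h2 : omB a d = 0 := mem_symplPerp.mp (hLe ha) d hd
      have h3 : omB b c = 0 := omB_isRefl _ _ (mem_symplPerp.mp (hLe hc) b hb)
      have h4 : omB b d = 0 := mem_symplPerp.mp (hll hb) d hd
      simp [map_add, LinearMap.add_apply, h1, h2, h3, h4]
    have hMle : (L ⊔ l) ≤ LinearMap.BilinForm.orthogonal omB (L ⊔ l) := by
      intro u hu
      rw [LinearMap.BilinForm.mem_orthogonal_iff]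
      intro n hn
      exact hMiso n hn u hu
    have hMrank : Module.finrank ℝ ↥(L ⊔ l) = 3 := by
      have hinf : Module.finrank ℝ ↥(L ⊓ l) = 0 := by
        have hle1 : Module.finrank ℝ ↥(L ⊓ l) ≤ 1 := hl ▸ Submodule.finrank_mono inf_le_right
        rcases Nat.lt_or_ge (Module.finrank ℝ ↥(L ⊓ l)) 1 with h | h
        · omega
        · exfalso
          have : L ⊓ l = l := Submodule.eq_of_le_of_finrank_eq inf_le_right (by omega)
          exact hnot (this ▸ inf_le_left)
      have := Submodule.finrank_sup_add_finrank_inf_eq L l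
      rw [hL2, hl, hinf] at this
      omega
    have horth := LinearMap.BilinForm.finrank_orthogonal omB_nondeg (L ⊔ l)
    rw [hVdim, hMrank] at horth
    have := Submodule.finrank_mono hMle
    rw [hMrank, horth] at this
    omega
  constructor
  · -- part 1
    have hge : 1 ≤ Module.finrank ℝ ↥(symplPerp l ⊓ L) := by
      have := Submodule.finrank_sup_add_finrank_inf_eq (symplPerp l) L
      rw [finrank_symplPerp, hl, hL2] at this
      have hsup : Module.finrank ℝ ↥(symplPerp l ⊔ L) ≤ Module.finrank ℝ (Fin 4 → ℝ) :=
        Submodule.finrank_le _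
      rw [hVdim] at hsup
      omega
    have hlt : symplPerp l ⊓ L < L := by
      refine lt_of_le_of_ne inf_le_right ?_
      intro heq
      exact hLnot (heq ▸ inf_le_left)
    have hlt2 := Submodule.finrank_lt_finrank_of_lt hlt
    rw [hL2] at hlt2
    have heq1 : Module.finrank ℝ ↥(symplPerp l ⊓ L) = 1 := by omega
    refine ⟨heq1, ?_⟩
    intro hWl
    have : symplPerp l ⊓ L = l :=
      Submodule.eq_of_le_of_finrank_eq hWl (by rw [heq1, hl])
    exact hnot (this ▸ inf_le_right)
  refine ⟨?_, ?_⟩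
  · -- part 2
    intro k
    ext v
    simp only [Submodule.mem_inf, Submodule.mem_map]
    constructor
    · rintro ⟨hv, x, hxL, hTx⟩
      refine ⟨hv, ?_⟩
      have hδv : δ v = 0 := (hker v).mpr hv
      have hvx : v = x + (k : ℝ) • δ x := by rw [← hTx, hpow]
      have hδx : δ x = 0 := by
        have : δ v = δ x + (k : ℝ) • δ (δ x) := by rw [hvx, map_add, map_smul]
        rw [hδδ, smul_zero, add_zero] at this
        rw [← this, hδv]
      have : v = x := by rw [hvx, hδx, smul_zero, add_zero]
      rwa [this]
    · rintro ⟨hv, hvL⟩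
      refine ⟨hv, v, hvL, ?_⟩
      rw [hpow, (hker v).mpr hv, smul_zero, add_zero]
  · -- part 3
    intro w hwL hwperp
    refine ⟨δ w, hδl w, ?_, ?_⟩
    · intro h0
      exact hwperp ((hker w).mp h0)
    · have key : Filter.Tendsto (fun k : ℕ => (k : ℝ)⁻¹ • w + δ w)
          Filter.atTop (nhds (δ w)) := by
        have h1 : Filter.Tendsto (fun k : ℕ => (k : ℝ)⁻¹ • w) Filter.atTop
            (nhds (0 : Fin 4 → ℝ)) := by
          have := (tendsto_inv_atTop_nhds_zero_nat (𝕜 := ℝ)).smul_const w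
          simpa using this
        have := h1.add_const (δ w)
        simpa using this
      refine key.congr' ?_
      filter_upwards [Filter.eventually_ge_atTop 1] with k hk
      have hk0 : (k : ℝ) ≠ 0 := by positivity
      rw [hpow, smul_add, smul_smul, inv_mul_cancel₀ hk0, one_smul]
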